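/- For an ergodic finite Markov chain on n states, there exists a map f from the state space into ℝ^n equipped with the positive semidefinite quadratic form ‖x‖² = ∑_{ij} x_i Δ^{ij} x_j such that ‖f(a) − f(b)‖² = T_{ab} for all states a, b. Concretely, f(a) = (Z̃_{a1}, ..., Z̃_{an}) works. -/

import Mathlib

open Matrix Finset

private lemma pow_entry_nonneg' {n : ℕ} (P : Matrix (Fin n) (Fin n) ℝ)
    (hP0 : ∀ i j, 0 ≤ P i j) : ∀ k i j, 0 ≤ (P ^ k) i j := by
  intro k
  induction k with
  | zero => intro i j; rw [pow_zero]; rw [Matrix.one_apply]; split <;> norm_num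
  | succ k ih =>
      intro i j
      rw [pow_succ, Matrix.mul_apply]
      exact Finset.sum_nonneg fun m _ => mul_nonneg (ih i m) (hP0 m j)

private lemma pow_rowsum' {n : ℕ} (P : Matrix (Fin n) (Fin n) ℝ)
    (hP1 : ∀ i, ∑ j, P i j = 1) : ∀ k i, ∑ j, (P ^ k) i j = 1 := by
  intro k
  induction k with
  | zero => intro i; simp [Matrix.one_apply]
  | succ k ih =>
      intro i
      rw [pow_succ]
      simp only [Matrix.mul_apply]
      rw [Finset.sum_comm]
      calc ∑ m, ∑ j, (P ^ k) i m * P m j = ∑ m, (P ^ k) i m * ∑ j, P m j := by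
            simp [Finset.mul_sum]
        _ = 1 := by simp [hP1, ih i]

/-- Embedding of an ergodic chain into `ℝⁿ` with the positive semidefinite
quadratic form `Q x = ∑ᵢⱼ xᵢ Δ^{ij} xⱼ`, realizing commuting times as squared
norms: concretely `f a = (Z̃ a 1, ..., Z̃ a n)` satisfies
`Q (f a - f b) = T a b`. -/
theorem euclidean_embedding_commute_times {n : ℕ}
    (P : Matrix (Fin n) (Fin n) ℝ)
    (hP0 : ∀ i j, 0 ≤ P i j) (hP1 : ∀ i, ∑ j, P i j = 1)
    (herg : ∃ k : ℕ, ∀ i j, 0 < (P ^ k) i j)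
    (w : Fin n → ℝ)
    (hw1 : ∑ i, w i = 1) (hwpos : ∀ i, 0 < w i)
    (hwP : ∀ j, ∑ i, w i * P i j = w j)
    (Pinf : Matrix (Fin n) (Fin n) ℝ) (hPinf : ∀ i j, Pinf i j = w j)
    (Z : Matrix (Fin n) (Fin n) ℝ) (hZ : Z = (1 - P + Pinf)⁻¹ - Pinf)
    (Ztil : Matrix (Fin n) (Fin n) ℝ) (hZtil : ∀ i j, Ztil i j = Z i j / w j)
    (Δ : Matrix (Fin n) (Fin n) ℝ)
    (hΔ : ∀ i j, Δ i j = w i * ((if i = j then (1 : ℝ) else 0) - P i j))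
    (M : Fin n → Fin n → ℝ)
    (hMdiag : ∀ b, M b b = 0)
    (hMstep : ∀ a b, a ≠ b → M a b = 1 + ∑ j, P a j * M j b)
    (T : Fin n → Fin n → ℝ)
    (hT : ∀ a b, T a b = M a b + M b a)
    (Q : (Fin n → ℝ) → ℝ)
    (hQ : ∀ x, Q x = ∑ i, ∑ j, x i * Δ i j * x j) :
    (∀ x : Fin n → ℝ, 0 ≤ Q x) ∧
    (∀ a b, Q (fun i => Ztil a i - Ztil b i) = T a b) := by
  -- canonical form of Q
  have hQ' : ∀ x : Fin n → ℝ,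
      Q x = ∑ i, w i * x i ^ 2 - ∑ i, ∑ j, w i * P i j * (x i * x j) := by
    intro x
    rw [hQ, ← Finset.sum_sub_distrib]
    refine Finset.sum_congr rfl fun i _ => ?_
    calc ∑ j, x i * Δ i j * x j
        = ∑ j, ((if i = j then w i * x i ^ 2 else 0) - w i * P i j * (x i * x j)) := by
          refine Finset.sum_congr rfl fun j _ => ?_
          rw [hΔ]
          by_cases h : i = j
          · subst h; simp; ring
          · simp [h]; ring
      _ = w i * x i ^ 2 - ∑ j, w i * P i j * (x i * x j) := by
          rw [Finset.sum_sub_distrib, Finset.sum_ite_eq]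
          simp
  constructor
  · -- positivity
    intro x
    have S1 : ∑ i, ∑ j, w i * P i j * x i ^ 2 = ∑ i, w i * x i ^ 2 := by
      refine Finset.sum_congr rfl fun i _ => ?_
      rw [show ∑ j, w i * P i j * x i ^ 2 = w i * x i ^ 2 * ∑ j, P i j by
        rw [Finset.mul_sum]; exact Finset.sum_congr rfl fun j _ => by ring]
      rw [hP1 i, mul_one]
    have S2 : ∑ i, ∑ j, w i * P i j * x j ^ 2 = ∑ i, w i * x i ^ 2 := by
      rw [Finset.sum_comm]
      refine Finset.sum_congr rfl fun j _ => ?_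
      rw [show ∑ i, w i * P i j * x j ^ 2 = (∑ i, w i * P i j) * x j ^ 2 by
        rw [Finset.sum_mul]]
      rw [hwP j]
    have expand : ∑ i, ∑ j, w i * P i j * (x i - x j) ^ 2
        = (∑ i, ∑ j, w i * P i j * x i ^ 2) + (∑ i, ∑ j, w i * P i j * x j ^ 2)
          - 2 * ∑ i, ∑ j, w i * P i j * (x i * x j) := by
      rw [Finset.mul_sum, ← Finset.sum_add_distrib, ← Finset.sum_sub_distrib]
      refine Finset.sum_congr rfl fun i _ => ?_
      rw [Finset.mul_sum, ← Finset.sum_add_distrib, ← Finset.sum_sub_distrib]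
      exact Finset.sum_congr rfl fun j _ => by ring
    have key : Q x = 2⁻¹ * ∑ i, ∑ j, w i * P i j * (x i - x j) ^ 2 := by
      rw [hQ' x, expand, S1, S2]; ring
    rw [key]
    refine mul_nonneg (by norm_num) (Finset.sum_nonneg fun i _ =>
      Finset.sum_nonneg fun j _ =>
        mul_nonneg (mul_nonneg (hwpos i).le (hP0 i j)) (sq_nonneg _))
  · intro a b
    haveI : Nonempty (Fin n) := ⟨a⟩
    set A : Matrix (Fin n) (Fin n) ℝ := 1 - P + Pinf with hA
    -- kernel of A is trivial
    have hker : ∀ v : Fin n → ℝ, A.mulVec v = 0 → v = 0 := by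
      intro v hv
      have hent : ∀ i, v i - (∑ j, P i j * v j) + (∑ j, w j * v j) = 0 := by
        intro i
        have h0 : ∑ j, ((if i = j then (1:ℝ) else 0) - P i j + w j) * v j = 0 := by
          have := congrFun hv i
          simpa [hA, Matrix.mulVec, dotProduct, Matrix.add_apply,
            Matrix.sub_apply, Matrix.one_apply, hPinf] using this
        calc v i - (∑ j, P i j * v j) + (∑ j, w j * v j)
            = ∑ j, ((if i = j then (1:ℝ) else 0) - P i j + w j) * v j := by
              rw [show ∑ j, ((if i = j then (1:ℝ) else 0) - P i j + w j) * v j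
                  = ∑ j, ((if i = j then v j else 0) - P i j * v j + w j * v j) from
                Finset.sum_congr rfl fun j _ => by by_cases h : i = j <;> simp [h] <;> ring]
              rw [Finset.sum_add_distrib, Finset.sum_sub_distrib, Finset.sum_ite_eq]
              simp
          _ = 0 := h0
      have hs : ∑ j, w j * v j = 0 := by
        have h0 : ∑ i, w i * (v i - (∑ j, P i j * v j) + (∑ j, w j * v j)) = 0 := by
          refine Finset.sum_eq_zero fun i _ => by rw [hent i, mul_zero]
        have h1 : ∑ i, w i * (v i - (∑ j, P i j * v j) + (∑ j, w j * v j))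
            = (∑ i, w i * v i) - (∑ i, ∑ j, w i * (P i j * v j))
              + (∑ i, w i) * (∑ j, w j * v j) := by
          rw [Finset.sum_mul, ← Finset.sum_sub_distrib, ← Finset.sum_add_distrib]
          refine Finset.sum_congr rfl fun i _ => ?_
          rw [mul_add, mul_sub, Finset.mul_sum]
        have h2 : ∑ i, ∑ j, w i * (P i j * v j) = ∑ j, w j * v j := by
          rw [Finset.sum_comm]
          refine Finset.sum_congr rfl fun j _ => ?_
          rw [show ∑ i, w i * (P i j * v j) = (∑ i, w i * P i j) * v j by
            rw [Finset.sum_mul]; exact Finset.sum_congr rfl fun i _ => by ring]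
          rw [hwP j]
        rw [h1, h2, hw1, one_mul] at h0
        linarith
      have hfix : ∀ i, v i = ∑ j, P i j * v j := by
        intro i; have := hent i; rw [hs] at this; linarith
      have hfixk : ∀ k i, v i = ∑ j, (P ^ k) i j * v j := by
        intro k
        induction k with
        | zero => intro i; simp [Matrix.one_apply]
        | succ k ih =>
            intro i
            calc v i = ∑ j, P i j * v j := hfix i
              _ = ∑ j, P i j * (∑ m, (P ^ k) j m * v m) := by
                  exact Finset.sum_congr rfl fun j _ => by rw [← ih j]
              _ = ∑ j, ∑ m, P i j * ((P ^ k) j m * v m) := by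
                  exact Finset.sum_congr rfl fun j _ => by rw [Finset.mul_sum]
              _ = ∑ m, ∑ j, P i j * ((P ^ k) j m * v m) := Finset.sum_comm
              _ = ∑ m, (∑ j, P i j * (P ^ k) j m) * v m := by
                  refine Finset.sum_congr rfl fun m _ => ?_
                  rw [Finset.sum_mul]
                  exact Finset.sum_congr rfl fun j _ => by ring
              _ = ∑ m, (P ^ (k+1)) i m * v m := by
                  refine Finset.sum_congr rfl fun m _ => ?_
                  rw [pow_succ', Matrix.mul_apply]
      obtain ⟨k, hk⟩ := herg
      obtain ⟨a₀, -, ha₀⟩ := Finset.exists_max_image Finset.univ v Finset.univ_nonempty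
      have hconst : ∀ j, v j = v a₀ := by
        intro j
        by_contra hne
        have hlt : v j < v a₀ := lt_of_le_of_ne (ha₀ j (Finset.mem_univ j)) hne
        have h1 : ∑ m, (P ^ k) a₀ m * v m < ∑ m, (P ^ k) a₀ m * v a₀ := by
          refine Finset.sum_lt_sum (fun m _ => ?_) ⟨j, Finset.mem_univ j, ?_⟩
          · exact mul_le_mul_of_nonneg_left (ha₀ m (Finset.mem_univ m))
              (pow_entry_nonneg' P hP0 k a₀ m)
          · exact mul_lt_mul_of_pos_left hlt (hk a₀ j)
        rw [← hfixk k a₀] at h1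
        have h2 : ∑ m, (P ^ k) a₀ m * v a₀ = v a₀ := by
          rw [← Finset.sum_mul, pow_rowsum' P hP1 k a₀, one_mul]
        rw [h2] at h1
        exact lt_irrefl _ h1
      have hva : v a₀ = 0 := by
        have h3 : ∑ j, w j * v j = ∑ j, w j * v a₀ :=
          Finset.sum_congr rfl fun j _ => by rw [hconst j]
        rw [hs, ← Finset.sum_mul, hw1, one_mul] at h3
        exact h3.symm
      funext i
      rw [Pi.zero_apply, hconst i, hva]
    have hdet : IsUnit A.det := by
      rw [← Matrix.isUnit_iff_isUnit_det, ← Matrix.mulVec_injective_iff_isUnit]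
      intro x y hxy
      have h0 : A.mulVec (x - y) = 0 := by
        rw [Matrix.mulVec_sub, hxy, sub_self]
      have := hker _ h0
      exact sub_eq_zero.mp this
    have hAinv : A * A⁻¹ = 1 := Matrix.mul_nonsing_inv A hdet
    have hinvA : A⁻¹ * A = 1 := Matrix.nonsing_inv_mul A hdet
    have hPP : Pinf * Pinf = Pinf := by
      ext i j
      rw [Matrix.mul_apply]
      simp only [hPinf]
      rw [← Finset.sum_mul, hw1, one_mul]
    have hPPinf : P * Pinf = Pinf := by
      ext i j
      rw [Matrix.mul_apply]
      simp only [hPinf]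
      rw [← Finset.sum_mul, hP1, one_mul]
    have hPinfP : Pinf * P = Pinf := by
      ext i j
      rw [Matrix.mul_apply]
      simp only [hPinf]
      rw [hwP j]
    have hAPinf : A * Pinf = Pinf := by
      rw [hA, add_mul, sub_mul, one_mul, hPPinf, hPP]
      abel
    have hPinfA : Pinf * A = Pinf := by
      rw [hA, mul_add, mul_sub, mul_one, hPinfP, hPP]
      abel
    have hinvPinf : A⁻¹ * Pinf = Pinf := by
      calc A⁻¹ * Pinf = A⁻¹ * (A * Pinf) := by rw [hAPinf]
        _ = (A⁻¹ * A) * Pinf := by rw [mul_assoc]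
        _ = Pinf := by rw [hinvA, one_mul]
    have hPinfinv : Pinf * A⁻¹ = Pinf := by
      calc Pinf * A⁻¹ = (Pinf * A) * A⁻¹ := by rw [hPinfA]
        _ = Pinf * (A * A⁻¹) := by rw [mul_assoc]
        _ = Pinf := by rw [hAinv, mul_one]
    have h1P : (1 : Matrix (Fin n) (Fin n) ℝ) - P = A - Pinf := by
      rw [hA]; abel
    have hZmat : (1 - P) * Z = 1 - Pinf := by
      rw [hZ, h1P, sub_mul, mul_sub, mul_sub, hAinv, hAPinf, hPinfinv, hPP]
      abel
    have hZmat' : Z * (1 - P) = 1 - Pinf := by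
      rw [hZ, h1P, mul_sub, sub_mul, sub_mul, hinvA, hinvPinf, hPinfA, hPP]
      abel
    have hPZ : ∀ i j, ∑ k, P i k * Z k j
        = Z i j - (if i = j then (1:ℝ) else 0) + w j := by
      intro i j
      have h := congrFun (congrFun hZmat i) j
      rw [sub_mul, one_mul] at h
      simp only [Matrix.sub_apply, Matrix.mul_apply, Matrix.one_apply, hPinf] at h
      linarith
    have hZP : ∀ i j, ∑ k, Z i k * P k j
        = Z i j - (if i = j then (1:ℝ) else 0) + w j := by
      intro i j
      have h := congrFun (congrFun hZmat' i) j
      rw [mul_sub, mul_one] at h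
      simp only [Matrix.sub_apply, Matrix.mul_apply, Matrix.one_apply, hPinf] at h
      linarith
    -- uniqueness principle
    have hle : ∀ (b' : Fin n) (D : Fin n → ℝ), D b' = 0 →
        (∀ i, i ≠ b' → D i = ∑ j, P i j * D j) → ∀ i, D i ≤ 0 := by
      intro b' D hDb hDs i
      by_contra hpos
      push_neg at hpos
      obtain ⟨a₀, -, ha₀⟩ := Finset.exists_max_image Finset.univ D Finset.univ_nonempty
      have hcpos : 0 < D a₀ := lt_of_lt_of_le hpos (ha₀ i (Finset.mem_univ i))
      have hstep1 : ∀ m, D m = D a₀ → ∀ j, 0 < P m j → D j = D a₀ := by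
        intro m hm j hPj
        have hmb : m ≠ b' := by
          rintro rfl; rw [hDb] at hm; exact absurd hm.symm (ne_of_gt hcpos)
        have hsum : ∑ l, P m l * (D a₀ - D l) = 0 := by
          have hexp : ∑ l, P m l * (D a₀ - D l)
              = (∑ l, P m l) * D a₀ - ∑ l, P m l * D l := by
            rw [Finset.sum_mul, ← Finset.sum_sub_distrib]
            exact Finset.sum_congr rfl fun l _ => by ring
          rw [hexp, hP1, one_mul, ← hDs m hmb, hm]
          ring
        have hall := (Finset.sum_eq_zero_iff_of_nonneg (fun l _ =>
          mul_nonneg (hP0 m l) (by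
            have := ha₀ l (Finset.mem_univ l); linarith))).mp hsum j (Finset.mem_univ j)
        rcases mul_eq_zero.mp hall with h | h
        · exact absurd h (ne_of_gt hPj)
        · linarith
      obtain ⟨k, hk⟩ := herg
      have hclaim : ∀ k' (m : Fin n), D m = D a₀ → ∀ j, 0 < (P ^ k') m j → D j = D a₀ := by
        intro k'
        induction k' with
        | zero =>
            intro m hm j hj
            have hmj : m = j := by
              by_contra hne
              rw [pow_zero, Matrix.one_apply_ne hne] at hj
              exact lt_irrefl 0 hj
            rwa [← hmj]
        | succ k' ih =>
            intro m hm j hj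
            rw [pow_succ, Matrix.mul_apply] at hj
            obtain ⟨l, -, hl⟩ : ∃ l ∈ Finset.univ, 0 < (P ^ k') m l * P l j := by
              by_contra hcon
              push_neg at hcon
              have : ∑ l, (P ^ k') m l * P l j ≤ 0 :=
                Finset.sum_nonpos fun l hlm => hcon l hlm
              linarith
            have h1 : 0 < (P ^ k') m l := by
              rcases (pow_entry_nonneg' P hP0 k' m l).lt_or_eq with h | h
              · exact h
              · rw [← h, zero_mul] at hl; exact absurd hl (lt_irrefl 0)
            have h2 : 0 < P l j := by
              rcases (hP0 l j).lt_or_eq with h | h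
              · exact h
              · rw [← h, mul_zero] at hl; exact absurd hl (lt_irrefl 0)
            exact hstep1 l (ih m hm l h1) j h2
      have hDb' : D b' = D a₀ := hclaim k a₀ rfl b' (hk a₀ b')
      rw [hDb] at hDb'
      exact absurd hDb'.symm (ne_of_gt hcpos)
    -- identify M with Ztil expression
    have hMN : ∀ a' b', M a' b' = Ztil b' b' - Ztil a' b' := by
      intro a' b'
      have hwb : w b' ≠ 0 := ne_of_gt (hwpos b')
      have hNstep : ∀ i, i ≠ b' →
          Ztil b' b' - Ztil i b' = 1 + ∑ j, P i j * (Ztil b' b' - Ztil j b') := by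
        intro i hib
        have hsplit : ∑ j, P i j * (Ztil b' b' - Ztil j b')
            = (∑ j, P i j) * Ztil b' b' - ∑ j, P i j * (Z j b' / w b') := by
          rw [Finset.sum_mul, ← Finset.sum_sub_distrib]
          refine Finset.sum_congr rfl fun j _ => ?_
          rw [hZtil j b']; ring
        have hdiv : ∑ j, P i j * (Z j b' / w b') = (∑ j, P i j * Z j b') / w b' := by
          rw [Finset.sum_div]
          exact Finset.sum_congr rfl fun j _ => by ring
        rw [hsplit, hdiv, hP1, one_mul, hPZ i b', if_neg hib]
        rw [hZtil b' b', hZtil i b']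
        field_simp
        ring
      set D : Fin n → ℝ := fun i => M i b' - (Ztil b' b' - Ztil i b') with hD
      have hD0 : D b' = 0 := by simp [hD, hMdiag]
      have hDs : ∀ i, i ≠ b' → D i = ∑ j, P i j * D j := by
        intro i hib
        have : D i = (1 + ∑ j, P i j * M j b')
            - (1 + ∑ j, P i j * (Ztil b' b' - Ztil j b')) := by
          rw [hD]
          simp only []
          rw [← hMstep i b' hib, ← hNstep i hib]
        rw [this]
        rw [show (1 + ∑ j, P i j * M j b') - (1 + ∑ j, P i j * (Ztil b' b' - Ztil j b'))
            = ∑ j, P i j * M j b' - ∑ j, P i j * (Ztil b' b' - Ztil j b') by ring]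
        rw [← Finset.sum_sub_distrib]
        exact Finset.sum_congr rfl fun j _ => by rw [hD]; ring
      have h1 := hle b' D hD0 hDs
      have h2 := hle b' (fun i => -D i)
        (show -D b' = 0 by rw [hD0, neg_zero])
        (fun i hib => show -D i = ∑ j, P i j * -D j by
          rw [hDs i hib]
          calc -∑ j, P i j * D j = ∑ j, -(P i j * D j) := by
                rw [Finset.sum_neg_distrib]
            _ = ∑ j, P i j * -D j := Finset.sum_congr rfl fun j _ => by ring)
      have h2a : -D a' ≤ 0 := h2 a'
      have hDa : D a' = 0 := le_antisymm (h1 a') (by linarith)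
      have hDa' : M a' b' - (Ztil b' b' - Ztil a' b') = 0 := hDa
      linarith
    -- final computation
    have hwx : ∀ i, (Ztil a i - Ztil b i) * w i = Z a i - Z b i := by
      intro i
      have hwi : w i ≠ 0 := ne_of_gt (hwpos i)
      rw [hZtil a i, hZtil b i]
      field_simp
    have hinner : ∀ j, ∑ i, (Ztil a i - Ztil b i) * Δ i j
        = (if a = j then (1:ℝ) else 0) - (if b = j then (1:ℝ) else 0) := by
      intro j
      have hterm : ∀ i, (Ztil a i - Ztil b i) * Δ i j
          = (if i = j then (Ztil a i - Ztil b i) * w i else 0)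
            - ((Ztil a i - Ztil b i) * w i) * P i j := by
        intro i
        rw [hΔ]
        by_cases h : i = j
        · subst h; simp; ring
        · simp [h]; ring
      rw [Finset.sum_congr rfl fun i _ => hterm i, Finset.sum_sub_distrib,
        Finset.sum_ite_eq']
      simp only [Finset.mem_univ, if_true]
      rw [Finset.sum_congr rfl fun i _ => by rw [hwx i]]
      rw [show ∑ i, (Z a i - Z b i) * P i j
          = ∑ i, Z a i * P i j - ∑ i, Z b i * P i j by
        rw [← Finset.sum_sub_distrib]
        exact Finset.sum_congr rfl fun i _ => by ring]
      rw [hZP a j, hZP b j, hwx j]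
      ring
    rw [hQ, Finset.sum_comm]
    have hcol : ∀ j, ∑ i, (Ztil a i - Ztil b i) * Δ i j * (Ztil a j - Ztil b j)
        = ((if a = j then (1:ℝ) else 0) - (if b = j then (1:ℝ) else 0))
          * (Ztil a j - Ztil b j) := by
      intro j
      rw [← hinner j, Finset.sum_mul]
    calc ∑ j, ∑ i, (Ztil a i - Ztil b i) * Δ i j * (Ztil a j - Ztil b j)
        = ∑ j, ((if a = j then (1:ℝ) else 0) - (if b = j then (1:ℝ) else 0))
            * (Ztil a j - Ztil b j) := Finset.sum_congr rfl fun j _ => hcol j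
      _ = (Ztil a a - Ztil b a) - (Ztil a b - Ztil b b) := by
          have e : ∑ j, ((if a = j then (1:ℝ) else 0) - (if b = j then (1:ℝ) else 0))
              * (Ztil a j - Ztil b j)
              = ∑ j, ((if a = j then Ztil a j - Ztil b j else 0)
                - (if b = j then Ztil a j - Ztil b j else 0)) :=
            Finset.sum_congr rfl fun j _ => by
              by_cases h1 : a = j <;> by_cases h2 : b = j <;> simp [h1, h2]
          rw [e, Finset.sum_sub_distrib, Finset.sum_ite_eq, Finset.sum_ite_eq]
          simp
      _ = T a b := by
          rw [hT, hMN a b, hMN b a]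
          ring
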